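/- arXiv:2501.17364 — 2 statements merged into one kernel-verified Lean document; each statement's English description precedes it below -/
import Mathlib

section
/- Every strongly internal set is sharply open: if (A_ε) is a net of subsets of ℝ^n, then ⟨A_ε⟩ := { x ∈ ℝ̃_ρ^n : for all representatives (x_ε) of x, x_ε ∈ A_ε for ε small } is open in the sharp topology; moreover ⟨A_ε⟩ = ⟨int(A_ε)⟩. -/
open Filter Topology

namespace RC

def F : Filter ℝ := nhdsWithin 0 (Set.Ioi 0)

/-- A gauge: a net `ρ : (0,1] → (0,1]` with `ρ ε → 0` as `ε → 0⁺`. -/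
def Gauge (ρ : ℝ → ℝ) : Prop :=
  (∀ ε ∈ Set.Ioc (0:ℝ) 1, ρ ε ∈ Set.Ioc (0:ℝ) 1) ∧ Tendsto ρ F (nhds 0)

/-- ρ-moderate real nets: `x_ε = O(ρ_ε^{-N})` for some `N`. -/
def Mod (ρ x : ℝ → ℝ) : Prop :=
  ∃ N : ℕ, ∃ C : ℝ, ∀ᶠ ε in F, |x ε| ≤ C * (ρ ε)⁻¹ ^ N

/-- ρ-negligible real nets: `x_ε = O(ρ_ε^{N})` for all `N`. -/
def Ngl (ρ x : ℝ → ℝ) : Prop :=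
  ∀ N : ℕ, ∃ C : ℝ, ∀ᶠ ε in F, |x ε| ≤ C * ρ ε ^ N

def Eqv (ρ x y : ℝ → ℝ) : Prop := Ngl ρ (x - y)

/-- The order on generalized numbers, at the level of representatives. -/
def leG (ρ x y : ℝ → ℝ) : Prop :=
  ∀ x', Mod ρ x' → Eqv ρ x' x → ∃ y', Mod ρ y' ∧ Eqv ρ y' y ∧ ∀ᶠ ε in F, x' ε ≤ y' ε

/-- Invertibility in the quotient ring, at the level of representatives. -/
def InvG (ρ x : ℝ → ℝ) : Prop := ∃ y, Mod ρ y ∧ Eqv ρ (x * y) 1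

def ltG (ρ x y : ℝ → ℝ) : Prop := leG ρ x y ∧ InvG ρ (y - x)

def posInv (ρ r : ℝ → ℝ) : Prop := ltG ρ 0 r

def ModC (ρ : ℝ → ℝ) (x : ℝ → ℂ) : Prop :=
  ∃ N : ℕ, ∃ C : ℝ, ∀ᶠ ε in F, ‖x ε‖ ≤ C * (ρ ε)⁻¹ ^ N

def NglC (ρ : ℝ → ℝ) (x : ℝ → ℂ) : Prop :=
  ∀ N : ℕ, ∃ C : ℝ, ∀ᶠ ε in F, ‖x ε‖ ≤ C * ρ ε ^ N

def EqvC (ρ : ℝ → ℝ) (x y : ℝ → ℂ) : Prop := NglC ρ (x - y)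

def InvC (ρ : ℝ → ℝ) (x : ℝ → ℂ) : Prop := ∃ y, ModC ρ y ∧ EqvC ρ (x * y) 1

noncomputable def absC (x : ℝ → ℂ) : ℝ → ℝ := fun ε => ‖x ε‖

variable {n : ℕ}

def ModV (ρ : ℝ → ℝ) (x : ℝ → EuclideanSpace ℝ (Fin n)) : Prop :=
  ∃ N : ℕ, ∃ C : ℝ, ∀ᶠ ε in F, ‖x ε‖ ≤ C * (ρ ε)⁻¹ ^ N

def NglV (ρ : ℝ → ℝ) (x : ℝ → EuclideanSpace ℝ (Fin n)) : Prop :=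
  ∀ N : ℕ, ∃ C : ℝ, ∀ᶠ ε in F, ‖x ε‖ ≤ C * ρ ε ^ N

def EqvV (ρ : ℝ → ℝ) (x y : ℝ → EuclideanSpace ℝ (Fin n)) : Prop := NglV ρ (x - y)

/-- Membership in the internal set `[A_ε]`. -/
def memInt (ρ : ℝ → ℝ) (A : ℝ → Set (EuclideanSpace ℝ (Fin n)))
    (x : ℝ → EuclideanSpace ℝ (Fin n)) : Prop :=
  ∃ x', ModV ρ x' ∧ EqvV ρ x' x ∧ ∀ᶠ ε in F, x' ε ∈ A ε

/-- Membership in the strongly internal set `⟨A_ε⟩`. -/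
def memStr (ρ : ℝ → ℝ) (A : ℝ → Set (EuclideanSpace ℝ (Fin n)))
    (x : ℝ → EuclideanSpace ℝ (Fin n)) : Prop :=
  ∀ x', ModV ρ x' → EqvV ρ x' x → ∀ᶠ ε in F, x' ε ∈ A ε

section Helpers
variable {n : ℕ}

lemma mem_F_Ioo {δ : ℝ} (hδ : 0 < δ) : Set.Ioo 0 δ ∈ F :=
  Ioo_mem_nhdsGT_of_mem ⟨le_refl 0, hδ⟩

lemma ev_Ioc : ∀ᶠ ε in F, ε ∈ Set.Ioc (0:ℝ) 1 :=
  Filter.eventually_of_mem (mem_F_Ioo one_pos) (fun _ h => ⟨h.1, le_of_lt h.2⟩)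

lemma ev_rho {ρ : ℝ → ℝ} (hρ : Gauge ρ) : ∀ᶠ ε in F, ρ ε ∈ Set.Ioc (0:ℝ) 1 :=
  ev_Ioc.mono fun ε hε => hρ.1 ε hε

lemma ev_rho_lt {ρ : ℝ → ℝ} (hρ : Gauge ρ) {c : ℝ} (hc : 0 < c) :
    ∀ᶠ ε in F, ρ ε < c :=
  hρ.2.eventually_lt_const hc

lemma nglV_trans {ρ : ℝ → ℝ} {a b c : ℝ → EuclideanSpace ℝ (Fin n)}
    (h1 : NglV ρ (a - b)) (h2 : NglV ρ (b - c)) : NglV ρ (a - c) := by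
  intro M
  obtain ⟨C1, h1⟩ := h1 M
  obtain ⟨C2, h2⟩ := h2 M
  refine ⟨C1 + C2, ?_⟩
  filter_upwards [h1, h2] with ε h1 h2
  have h3 : ‖(a - c) ε‖ ≤ ‖(a - b) ε‖ + ‖(b - c) ε‖ := by
    simp only [Pi.sub_apply]
    exact norm_sub_le_norm_sub_add_norm_sub _ _ _
  rw [add_mul]
  exact h3.trans (add_le_add h1 h2)

lemma key {ρ : ℝ → ℝ} (hρ : Gauge ρ) (A : ℝ → Set (EuclideanSpace ℝ (Fin n)))
    (x : ℝ → EuclideanSpace ℝ (Fin n)) (hx : ModV ρ x) (hm : memStr ρ A x) :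
    ∃ N : ℕ, ∀ᶠ ε in F, ∀ z, ‖z - x ε‖ ≤ ρ ε ^ N → z ∈ A ε := by
  by_contra h
  push_neg at h
  have H : ∀ (k : ℕ) (δ : ℝ), 0 < δ → ∃ t, (0 < t ∧ t < δ) ∧
      ∃ w, ‖w - x t‖ ≤ ρ t ^ k ∧ w ∉ A t := by
    intro k δ hδ
    have hfr := h k
    rw [Filter.frequently_iff] at hfr
    obtain ⟨t, ht, hQ⟩ := hfr (mem_F_Ioo hδ)
    exact ⟨t, ⟨ht.1, ht.2⟩, hQ⟩
  choose! g hg using H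
  have hg1 : ∀ (k : ℕ) (δ : ℝ), 0 < δ → 0 < g k δ := fun k δ h => ((hg k δ h).1).1
  have hg2 : ∀ (k : ℕ) (δ : ℝ), 0 < δ → g k δ < δ := fun k δ h => ((hg k δ h).1).2
  have hg3 : ∀ (k : ℕ) (δ : ℝ), 0 < δ →
      ∃ w, ‖w - x (g k δ)‖ ≤ ρ (g k δ) ^ k ∧ w ∉ A (g k δ) := fun k δ h => (hg k δ h).2
  set e : ℕ → ℝ := fun k => Nat.rec (g 0 1) (fun k t => g (k+1) (min t (1 / (k+2)))) k with he_def
  have heS : ∀ k : ℕ, e (k+1) = g (k+1) (min (e k) (1 / ((k:ℝ)+2))) := by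
    intro k
    rw [he_def]
  have he : ∀ k, (0 < e k ∧ e k < 1 / ((k:ℝ)+1)) ∧
      ∃ w, ‖w - x (e k)‖ ≤ ρ (e k) ^ k ∧ w ∉ A (e k) := by
    intro k
    induction k with
    | zero =>
      refine ⟨⟨hg1 0 1 one_pos, ?_⟩, hg3 0 1 one_pos⟩
      have h2 := hg2 0 1 one_pos
      norm_num
      exact h2
    | succ k ih =>
      have hpos : 0 < min (e k) (1 / ((k:ℝ)+2)) := lt_min ih.1.1 (by positivity)
      rw [heS]
      refine ⟨⟨hg1 _ _ hpos, ?_⟩, hg3 _ _ hpos⟩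
      have h2 := hg2 (k+1) _ hpos
      push_cast
      calc g (k+1) (min (e k) (1/((k:ℝ)+2))) < min (e k) (1/((k:ℝ)+2)) := h2
        _ ≤ 1/((k:ℝ)+2) := min_le_right _ _
        _ = 1/(((k:ℝ)+1)+1) := by ring_nf
  have hepos : ∀ k, 0 < e k := fun k => (he k).1.1
  have hdec : ∀ k, e (k+1) < e k := by
    intro k
    have hpos : 0 < min (e k) (1 / ((k:ℝ)+2)) := lt_min (hepos k) (by positivity)
    calc e (k+1) = g (k+1) (min (e k) (1/((k:ℝ)+2))) := heS k
      _ < min (e k) (1/((k:ℝ)+2)) := hg2 _ _ hpos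
      _ ≤ e k := min_le_left _ _
  have hanti : StrictAnti e := strictAnti_nat_of_succ_lt hdec
  have helt1 : ∀ k, e k < 1 := by
    intro k
    refine (he k).1.2.trans_le ?_
    rw [div_le_one (by positivity)]
    simp
  choose zz hzz1 hzz2 using fun k => (he k).2
  classical
  set x' : ℝ → EuclideanSpace ℝ (Fin n) :=
    fun t => if h : ∃ k, e k = t then zz h.choose else x t with hx'def
  have hx'e : ∀ k, x' (e k) = zz k := by
    intro k
    have hex : ∃ j, e j = e k := ⟨k, rfl⟩
    simp only [hx'def, dif_pos hex]
    exact congrArg zz (hanti.injective hex.choose_spec)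
  have hrho_mem : ∀ t ∈ Set.Ioo (0:ℝ) 1, ρ t ∈ Set.Ioc (0:ℝ) 1 :=
    fun t ht => hρ.1 t ⟨ht.1, le_of_lt ht.2⟩
  have hd1 : ∀ t ∈ Set.Ioo (0:ℝ) 1, ‖x' t - x t‖ ≤ 1 := by
    intro t ht
    by_cases hex : ∃ k, e k = t
    · obtain ⟨k, rfl⟩ := hex
      rw [hx'e k]
      exact (hzz1 k).trans (pow_le_one₀ (hrho_mem _ ht).1.le (hrho_mem _ ht).2)
    · simp [hx'def, dif_neg hex]
  have hdM : ∀ M : ℕ, ∀ t ∈ Set.Ioo (0:ℝ) (e M), ‖x' t - x t‖ ≤ ρ t ^ M := by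
    intro M t ht
    have ht1 : t ∈ Set.Ioo (0:ℝ) 1 := ⟨ht.1, ht.2.trans (helt1 M)⟩
    by_cases hex : ∃ k, e k = t
    · obtain ⟨k, rfl⟩ := hex
      rw [hx'e k]
      have hMk : M ≤ k := by
        by_contra hc
        push_neg at hc
        exact absurd (hanti hc) (not_lt.mpr ht.2.le)
      exact (hzz1 k).trans
        (pow_le_pow_of_le_one (hrho_mem _ ht1).1.le (hrho_mem _ ht1).2 hMk)
    · simp [hx'def, dif_neg hex, pow_nonneg (hrho_mem _ ht1).1.le]
  have hx'mod : ModV ρ x' := by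
    obtain ⟨Nx, Cx, hCx⟩ := hx
    refine ⟨Nx, Cx + 1, ?_⟩
    filter_upwards [hCx, Filter.eventually_of_mem (mem_F_Ioo one_pos) (fun t ht => ht)]
      with t hb ht
    have h1 : ‖x' t‖ ≤ ‖x t‖ + ‖x' t - x t‖ := by
      have h0 := norm_add_le (x t) (x' t - x t); simpa using h0
    have hrinv : (1:ℝ) ≤ (ρ t)⁻¹ ^ Nx := by
      have hr := hrho_mem t ht
      exact one_le_pow₀ ((one_le_inv₀ hr.1).mpr hr.2)
    calc ‖x' t‖ ≤ ‖x t‖ + ‖x' t - x t‖ := h1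
      _ ≤ Cx * (ρ t)⁻¹ ^ Nx + 1 := add_le_add hb (hd1 t ht)
      _ ≤ Cx * (ρ t)⁻¹ ^ Nx + 1 * (ρ t)⁻¹ ^ Nx := by nlinarith
      _ = (Cx + 1) * (ρ t)⁻¹ ^ Nx := by ring
  have hx'eqv : EqvV ρ x' x := by
    intro M
    refine ⟨1, ?_⟩
    refine Filter.eventually_of_mem (mem_F_Ioo (hepos M)) (fun t ht => ?_)
    have h0 := hdM M t ht
    simpa using h0
  have hev := hm x' hx'mod hx'eqv
  have hfreq : ∃ᶠ t in F, x' t ∉ A t := by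
    rw [Filter.frequently_iff]
    intro U hU
    rw [F, Metric.mem_nhdsWithin_iff] at hU
    obtain ⟨δ, hδ, hsub⟩ := hU
    obtain ⟨k, hk⟩ := exists_nat_one_div_lt hδ
    refine ⟨e k, hsub ⟨?_, hepos k⟩, ?_⟩
    · have h3 : e k < δ := (he k).1.2.trans (by push_cast at hk ⊢; linarith)
      simpa [Real.dist_eq, abs_of_pos (hepos k)] using h3
    · rw [hx'e k]; exact hzz2 k
  obtain ⟨t, h1, h2⟩ := (hev.and_frequently hfreq).exists
  exact h2 h1

end Helpers
/-- Strongly internal sets are sharply open, and `⟨A_ε⟩ = ⟨int(A_ε)⟩`. -/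
theorem stronglyInternal_sharply_open (ρ : ℝ → ℝ) (hρ : Gauge ρ) (n : ℕ)
    (A : ℝ → Set (EuclideanSpace ℝ (Fin n))) :
    (∀ x, ModV ρ x → memStr ρ A x →
      ∃ r : ℝ → ℝ, Mod ρ r ∧ posInv ρ r ∧
        ∀ y, ModV ρ y → ltG ρ (fun ε => ‖x ε - y ε‖) r → memStr ρ A y) ∧
    (∀ x, ModV ρ x → (memStr ρ A x ↔ memStr ρ (fun ε => interior (A ε)) x)) := by
  constructor
  · intro x hx hmem
    obtain ⟨N, hN⟩ := key hρ A x hx hmem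
    have hrmod : Mod ρ (fun ε => ρ ε ^ (N+1)) := by
      refine ⟨0, 1, ?_⟩
      filter_upwards [ev_rho hρ] with ε hε
      simp only [pow_zero, mul_one]
      rw [abs_of_nonneg (pow_nonneg hε.1.le _)]
      exact pow_le_one₀ hε.1.le hε.2
    refine ⟨fun ε => ρ ε ^ (N+1), hrmod, ⟨?_, ?_⟩, ?_⟩
    · -- leG ρ 0 r
      intro x' hx'mod hx'eqv
      refine ⟨fun ε => ρ ε ^ (N+1), hrmod, ?_, ?_⟩
      · intro M
        exact ⟨0, Filter.Eventually.of_forall fun ε => by simp⟩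
      · obtain ⟨C, hC⟩ := hx'eqv (N+2)
        filter_upwards [hC, ev_rho hρ,
          ev_rho_lt hρ (c := 1/(|C|+1)) (by positivity)] with ε h1 h2 h3
        have e1 : x' ε ≤ C * ρ ε ^ (N+2) := by
          refine le_trans (le_abs_self _) ?_
          simpa using h1
        have e5 : C ≤ |C| := le_abs_self C
        have hq : (0:ℝ) ≤ ρ ε ^ (N+1) := pow_nonneg h2.1.le _
        have e6 : |C| * ρ ε ≤ 1 := by
          have h7 : |C| * ρ ε ≤ |C| * (1/(|C|+1)) :=
            mul_le_mul_of_nonneg_left h3.le (abs_nonneg C)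
          have h8 : |C| * (1/(|C|+1)) ≤ 1 := by
            rw [mul_one_div, div_le_one (by positivity)]
            linarith [abs_nonneg C]
          linarith
        have e2 : ρ ε ^ (N+2) = ρ ε * ρ ε ^ (N+1) := by ring
        rw [e2] at e1
        nlinarith [mul_le_mul_of_nonneg_right e6 hq,
          mul_le_mul_of_nonneg_right
            (mul_le_mul_of_nonneg_right e5 h2.1.le) hq]
    · -- InvG ρ (r - 0)
      refine ⟨fun ε => (ρ ε)⁻¹ ^ (N+1), ⟨N+1, 1, ?_⟩, ?_⟩
      · filter_upwards [ev_rho hρ] with ε hε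
        rw [abs_of_nonneg (pow_nonneg (inv_nonneg.mpr hε.1.le) _), one_mul]
      · intro M
        refine ⟨1, ?_⟩
        filter_upwards [ev_rho hρ] with ε hε
        have h0 : ρ ε ^ (N+1) * (ρ ε)⁻¹ ^ (N+1) = 1 := by
          rw [← mul_pow, mul_inv_cancel₀ hε.1.ne', one_pow]
        have h1 : (((fun ε => ρ ε ^ (N+1)) - 0) * fun ε => (ρ ε)⁻¹ ^ (N+1)) ε - (1:ℝ → ℝ) ε = 0 := by
          simp only [Pi.mul_apply, Pi.sub_apply, Pi.zero_apply, Pi.one_apply, sub_zero, h0,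
            sub_self]
        rw [Pi.sub_apply, h1, abs_zero, one_mul]
        exact pow_nonneg hε.1.le _
    · -- main openness statement
      intro y hy hlt
      have humod : Mod ρ (fun ε => ‖x ε - y ε‖) := by
        obtain ⟨N1, C1, h1⟩ := hx
        obtain ⟨N2, C2, h2⟩ := hy
        refine ⟨N1+N2, |C1|+|C2|, ?_⟩
        filter_upwards [h1, h2, ev_rho hρ] with ε e1 e2 e3
        have hinv1 : (1:ℝ) ≤ (ρ ε)⁻¹ := (one_le_inv₀ e3.1).mpr e3.2
        have hb1 : (ρ ε)⁻¹ ^ N1 ≤ (ρ ε)⁻¹ ^ (N1+N2) :=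
          pow_le_pow_right₀ hinv1 (Nat.le_add_right _ _)
        have hb2 : (ρ ε)⁻¹ ^ N2 ≤ (ρ ε)⁻¹ ^ (N1+N2) :=
          pow_le_pow_right₀ hinv1 (Nat.le_add_left _ _)
        have hnn : (0:ℝ) ≤ (ρ ε)⁻¹ ^ N1 := pow_nonneg (inv_nonneg.mpr e3.1.le) _
        have hnn2 : (0:ℝ) ≤ (ρ ε)⁻¹ ^ N2 := pow_nonneg (inv_nonneg.mpr e3.1.le) _
        calc |‖x ε - y ε‖| = ‖x ε - y ε‖ := abs_norm _
          _ ≤ ‖x ε‖ + ‖y ε‖ := norm_sub_le _ _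
          _ ≤ C1 * (ρ ε)⁻¹ ^ N1 + C2 * (ρ ε)⁻¹ ^ N2 := add_le_add e1 e2
          _ ≤ |C1| * (ρ ε)⁻¹ ^ (N1+N2) + |C2| * (ρ ε)⁻¹ ^ (N1+N2) :=
              add_le_add
                (mul_le_mul (le_abs_self _) hb1 hnn (abs_nonneg _))
                (mul_le_mul (le_abs_self _) hb2 hnn2 (abs_nonneg _))
          _ = (|C1|+|C2|) * (ρ ε)⁻¹ ^ (N1+N2) := by ring
      have hueqv : Eqv ρ (fun ε => ‖x ε - y ε‖) (fun ε => ‖x ε - y ε‖) := by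
        intro M
        exact ⟨0, Filter.Eventually.of_forall fun ε => by simp⟩
      obtain ⟨r', hr'mod, hr'eqv, hur'⟩ := hlt.1 _ humod hueqv
      intro y' hy'mod hy'eqv
      obtain ⟨C, hC⟩ := hr'eqv (N+2)
      obtain ⟨C3, hC3⟩ := hy'eqv (N+2)
      have hD0 : (0:ℝ) ≤ |C| + |C3| := by positivity
      filter_upwards [hN, hC, hC3, hur', ev_rho hρ,
        ev_rho_lt hρ (c := 1/((|C| + |C3|)+1)) (by positivity)] with ε h1 h2 h3 h4 h5 h6
      apply h1
      have hrpos : (0:ℝ) < ρ ε := h5.1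
      have hrle1 : ρ ε ≤ 1 := h5.2
      have hq : (0:ℝ) ≤ ρ ε ^ N := pow_nonneg hrpos.le _
      have hq2 : (0:ℝ) ≤ ρ ε ^ (N+2) := pow_nonneg hrpos.le _
      have t1 : ‖y' ε - x ε‖ ≤ ‖y' ε - y ε‖ + ‖y ε - x ε‖ :=
        norm_sub_le_norm_sub_add_norm_sub _ _ _
      have t2 : ‖y' ε - y ε‖ ≤ |C3| * ρ ε ^ (N+2) := by
        have h3' : ‖y' ε - y ε‖ ≤ C3 * ρ ε ^ (N+2) := by simpa using h3
        exact h3'.trans (mul_le_mul_of_nonneg_right (le_abs_self _) hq2)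
      have t4 : ‖x ε - y ε‖ ≤ r' ε := h4
      have t5 : r' ε ≤ ρ ε ^ (N+1) + |C| * ρ ε ^ (N+2) := by
        have h2' : |r' ε - ρ ε ^ (N+1)| ≤ C * ρ ε ^ (N+2) := by simpa using h2
        have := le_abs_self (r' ε - ρ ε ^ (N+1))
        have := mul_le_mul_of_nonneg_right (le_abs_self C) hq2
        linarith
      have h6' : ρ ε * ((|C| + |C3|) + 1) < 1 := by
        rw [← lt_div_iff₀ (by positivity)]
        exact h6
      have step : ρ ε ^ (N+1) + (|C| + |C3|) * ρ ε ^ (N+2) ≤ ρ ε ^ N := by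
        have e1 : ρ ε ^ (N+1) = ρ ε * ρ ε ^ N := by ring
        have e2 : ρ ε ^ (N+2) = ρ ε * ρ ε * ρ ε ^ N := by ring
        nlinarith [mul_nonneg hq (sub_nonneg.mpr h6'.le),
          mul_nonneg (mul_nonneg (mul_nonneg hD0 hrpos.le) hq) (sub_nonneg.mpr hrle1)]
      have t3 : ‖y ε - x ε‖ = ‖x ε - y ε‖ := norm_sub_rev _ _
      linarith
  · -- second part
    intro x hx
    constructor
    · intro hmem x' hx'mod hx'eqv
      have hm' : memStr ρ A x' := fun x'' h1 h2 => hmem x'' h1 (nglV_trans h2 hx'eqv)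
      obtain ⟨N, hN⟩ := key hρ A x' hx'mod hm'
      filter_upwards [hN, ev_rho hρ] with ε h1 h2
      have hsub : Metric.closedBall (x' ε) (ρ ε ^ N) ⊆ A ε := by
        intro z hz
        apply h1
        rw [Metric.mem_closedBall, dist_eq_norm] at hz
        exact hz
      have hnb : Metric.closedBall (x' ε) (ρ ε ^ N) ∈ nhds (x' ε) :=
        Metric.closedBall_mem_nhds _ (pow_pos h2.1 N)
      exact mem_interior_iff_mem_nhds.mpr (Filter.mem_of_superset hnb hsub)
    · intro hmem x' h1 h2
      exact (hmem x' h1 h2).mono fun ε h => interior_subset h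

end RC
end

section
/- (Ultrametric convergence criterion) Let ρ be a gauge and (a_n)_{n∈ℕ} a sequence in ℝ̃_ρ. The series Σ_{n=0}^∞ a_n converges in the sharp topology if and only if a_n → 0 in the sharp topology as n → ∞. -/
open Filter Topology

namespace RC

/-- Convergence of a sequence of generalized numbers in the sharp topology. -/
def SharpTendsto (ρ : ℝ → ℝ) (u : ℕ → ℝ → ℝ) (L : ℝ → ℝ) : Prop :=
  ∀ q : ℕ, ∃ M : ℕ, ∀ n ≥ M, ltG ρ (fun ε => |u n ε - L ε|) (fun ε => ρ ε ^ q)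

instance : F.NeBot := by
  rw [show F = nhdsWithin 0 (Set.Ioi 0) from rfl]; infer_instance

lemma F_Ioo {c : ℝ} (hc : 0 < c) : ∀ᶠ ε in F, 0 < ε ∧ ε < c := by
  have : Set.Ioo (0:ℝ) c ∈ F := Ioo_mem_nhdsGT_of_mem ⟨le_refl 0, hc⟩
  filter_upwards [this] with ε hε using ⟨hε.1, hε.2⟩

lemma exists_Ioo {p : ℝ → Prop} (h : ∀ᶠ ε in F, p ε) :
    ∃ η > 0, ∀ ε, 0 < ε → ε < η → p ε := by
  rw [show F = nhdsWithin 0 (Set.Ioi 0) from rfl, eventually_iff,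
    mem_nhdsGT_iff_exists_Ioo_subset] at h
  obtain ⟨u, hu, hsub⟩ := h
  exact ⟨u, hu, fun ε h1 h2 => hsub ⟨h1, h2⟩⟩

lemma gauge_mem {ρ : ℝ → ℝ} (hρ : Gauge ρ) : ∀ᶠ ε in F, 0 < ρ ε ∧ ρ ε ≤ 1 := by
  filter_upwards [F_Ioo one_pos] with ε hε
  exact (hρ.1 ε ⟨hε.1, le_of_lt hε.2⟩ : ρ ε ∈ Set.Ioc (0:ℝ) 1)

lemma gauge_small {ρ : ℝ → ℝ} (hρ : Gauge ρ) {c : ℝ} (hc : 0 < c) :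
    ∀ᶠ ε in F, 0 < ρ ε ∧ ρ ε < c := by
  have h2 : ∀ᶠ ε in F, ρ ε < c := by
    have := hρ.2 (Iio_mem_nhds hc)
    filter_upwards [this] with ε hε using hε
  filter_upwards [gauge_mem hρ, h2] with ε h1 h2 using ⟨h1.1, h2⟩

lemma mod_of_le {ρ x g : ℝ → ℝ} (hg : Mod ρ g) (h : ∀ᶠ ε in F, |x ε| ≤ |g ε|) :
    Mod ρ x := by
  obtain ⟨N, C, hC⟩ := hg
  exact ⟨N, C, by filter_upwards [hC, h] with ε h1 h2 using le_trans h2 h1⟩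

lemma mod_const (ρ : ℝ → ℝ) (c : ℝ) : Mod ρ (fun _ => c) :=
  ⟨0, |c|, by filter_upwards with ε; simp⟩

lemma mod_add {ρ x y : ℝ → ℝ} (hρ : Gauge ρ) (hx : Mod ρ x) (hy : Mod ρ y) :
    Mod ρ (fun ε => x ε + y ε) := by
  obtain ⟨N1, C1, h1⟩ := hx
  obtain ⟨N2, C2, h2⟩ := hy
  refine ⟨max N1 N2, |C1| + |C2|, ?_⟩
  filter_upwards [h1, h2, gauge_mem hρ] with ε h1 h2 hg
  have hinv : (1:ℝ) ≤ (ρ ε)⁻¹ := one_le_inv_iff₀.mpr ⟨hg.1, hg.2⟩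
  have e1 : (ρ ε)⁻¹ ^ N1 ≤ (ρ ε)⁻¹ ^ max N1 N2 := pow_le_pow_right₀ hinv (le_max_left _ _)
  have e2 : (ρ ε)⁻¹ ^ N2 ≤ (ρ ε)⁻¹ ^ max N1 N2 := pow_le_pow_right₀ hinv (le_max_right _ _)
  have p0 : (0:ℝ) < (ρ ε)⁻¹ ^ N1 := pow_pos (inv_pos.mpr hg.1) _
  have p0' : (0:ℝ) < (ρ ε)⁻¹ ^ N2 := pow_pos (inv_pos.mpr hg.1) _
  have c1 : 0 ≤ C1 := (mul_nonneg_iff_of_pos_right p0).mp (le_trans (abs_nonneg _) h1)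
  have c2 : 0 ≤ C2 := (mul_nonneg_iff_of_pos_right p0').mp (le_trans (abs_nonneg _) h2)
  calc |x ε + y ε| ≤ |x ε| + |y ε| := abs_add_le _ _
    _ ≤ C1 * (ρ ε)⁻¹ ^ N1 + C2 * (ρ ε)⁻¹ ^ N2 := add_le_add h1 h2
    _ ≤ (|C1| + |C2|) * (ρ ε)⁻¹ ^ max N1 N2 := by
        rw [abs_of_nonneg c1, abs_of_nonneg c2, add_mul]
        exact add_le_add (mul_le_mul_of_nonneg_left e1 c1) (mul_le_mul_of_nonneg_left e2 c2)

lemma mod_abs {ρ x : ℝ → ℝ} (hx : Mod ρ x) : Mod ρ (fun ε => |x ε|) :=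
  mod_of_le hx (by filter_upwards with ε; rw [abs_abs])

lemma mod_sub {ρ x y : ℝ → ℝ} (hρ : Gauge ρ) (hx : Mod ρ x) (hy : Mod ρ y) :
    Mod ρ (fun ε => x ε - y ε) := by
  have := mod_add hρ hx (mod_of_le hy (g := fun ε => y ε) ?_ : Mod ρ (fun ε => -(y ε)))
  · simpa [sub_eq_add_neg] using this
  · filter_upwards with ε; rw [abs_neg]

lemma mod_sum {ρ : ℝ → ℝ} (hρ : Gauge ρ) (a : ℕ → ℝ → ℝ) (ha : ∀ n, Mod ρ (a n)) (m : ℕ) :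
    Mod ρ (fun ε => ∑ k ∈ Finset.range m, a k ε) := by
  induction m with
  | zero => simpa using mod_const ρ 0
  | succ m ih =>
      have := mod_add hρ ih (ha m)
      simpa [Finset.sum_range_succ] using this

lemma mod_pow {ρ : ℝ → ℝ} (hρ : Gauge ρ) (q : ℕ) : Mod ρ (fun ε => ρ ε ^ q) := by
  refine ⟨0, 1, ?_⟩
  filter_upwards [gauge_mem hρ] with ε hg
  rw [pow_zero, mul_one, abs_of_nonneg (pow_nonneg (le_of_lt hg.1) _)]
  exact pow_le_one₀ (le_of_lt hg.1) hg.2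

lemma eqv_self (ρ x : ℝ → ℝ) : Eqv ρ x x := by
  intro N
  refine ⟨0, ?_⟩
  filter_upwards with ε
  simp

lemma ltG_of_forall {ρ : ℝ → ℝ} (hρ : Gauge ρ) {x y : ℝ → ℝ} (hx : Mod ρ x) (hy : Mod ρ y)
    {c : ℝ} {p : ℕ} (hc : 0 < c) (h : ∀ᶠ ε in F, x ε + c * ρ ε ^ p ≤ y ε) : ltG ρ x y := by
  constructor
  · intro x' hx' hxx'
    refine ⟨fun ε => y ε + (x' ε - x ε), ?_, ?_, ?_⟩
    · exact mod_add hρ hy (mod_sub hρ hx' hx)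
    · have : (fun ε => y ε + (x' ε - x ε)) - y = x' - x := by
        funext ε; simp only [Pi.sub_apply]; ring
      unfold Eqv; rw [this]; exact hxx'
    · filter_upwards [h, gauge_mem hρ] with ε h1 hg
      have : 0 ≤ c * ρ ε ^ p := le_of_lt (mul_pos hc (pow_pos hg.1 _))
      linarith
  · refine ⟨fun ε => (y ε - x ε)⁻¹, ⟨p, c⁻¹, ?_⟩, ?_⟩
    · filter_upwards [h, gauge_mem hρ] with ε h1 hg
      have hpos : 0 < c * ρ ε ^ p := mul_pos hc (pow_pos hg.1 _)
      have h2 : c * ρ ε ^ p ≤ y ε - x ε := by linarith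
      rw [abs_of_nonneg (inv_nonneg.mpr (by linarith))]
      calc (y ε - x ε)⁻¹ ≤ (c * ρ ε ^ p)⁻¹ := by
            apply inv_anti₀ hpos h2
        _ = c⁻¹ * (ρ ε)⁻¹ ^ p := by rw [mul_inv, inv_pow]
    · intro N
      refine ⟨1, ?_⟩
      filter_upwards [h, gauge_mem hρ] with ε h1 hg
      have hpos : 0 < c * ρ ε ^ p := mul_pos hc (pow_pos hg.1 _)
      have h2 : y ε - x ε ≠ 0 := by
        have : 0 ≤ c * ρ ε ^ p := le_of_lt hpos
        intro hz; linarith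
      have : (((y - x) * fun ε => (y ε - x ε)⁻¹) - 1) ε = 0 := by
        simp [Pi.mul_apply, Pi.sub_apply, Pi.one_apply, mul_inv_cancel₀ h2]
      rw [this, abs_zero, one_mul]
      exact pow_nonneg (le_of_lt hg.1) _

lemma ltG_pow_elim {ρ : ℝ → ℝ} (hρ : Gauge ρ) {x : ℝ → ℝ} (hx : Mod ρ x) {q : ℕ}
    (h : ltG ρ x (fun ε => ρ ε ^ q)) : ∀ᶠ ε in F, x ε ≤ 2 * ρ ε ^ q := by
  obtain ⟨y', hy'mod, hy'eqv, hxy'⟩ := h.1 x hx (eqv_self ρ x)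
  obtain ⟨C, hC⟩ := hy'eqv (q + 1)
  filter_upwards [hxy', hC, gauge_small hρ (c := 1 / (|C| + 1))
    (by positivity)] with ε h1 h2 hg
  have e1 : |y' ε - ρ ε ^ q| ≤ C * ρ ε ^ (q+1) := by
    simpa [Pi.sub_apply] using h2
  have hCa : C ≤ |C| := le_abs_self C
  have hrq : (0:ℝ) < ρ ε ^ q := pow_pos hg.1 _
  have hCrho : |C| * ρ ε ≤ 1 := by
    have h3 : ρ ε * (|C| + 1) < 1 := (lt_div_iff₀ (by positivity)).mp hg.2
    nlinarith [hg.1]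
  have e2 : C * ρ ε ^ (q+1) ≤ ρ ε ^ q := by
    have h4 : C * (ρ ε ^ q * ρ ε) ≤ |C| * (ρ ε ^ q * ρ ε) :=
      mul_le_mul_of_nonneg_right hCa (mul_nonneg hrq.le hg.1.le)
    have h5 : |C| * ρ ε * ρ ε ^ q ≤ 1 * ρ ε ^ q :=
      mul_le_mul_of_nonneg_right hCrho hrq.le
    calc C * ρ ε ^ (q+1) = C * (ρ ε ^ q * ρ ε) := by rw [pow_succ]
      _ ≤ |C| * (ρ ε ^ q * ρ ε) := h4
      _ = |C| * ρ ε * ρ ε ^ q := by ring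
      _ ≤ 1 * ρ ε ^ q := h5
      _ = ρ ε ^ q := one_mul _
  have := abs_le.mp e1
  calc x ε ≤ y' ε := h1
    _ ≤ ρ ε ^ q + C * ρ ε ^ (q+1) := by linarith [this.2]
    _ ≤ 2 * ρ ε ^ q := by linarith

/-- Ultrametric criterion: a series in `ℝ̃_ρ` converges sharply iff its terms tend to 0
sharply. -/
theorem series_converges_iff_terms_tendsto_zero (ρ : ℝ → ℝ) (hρ : Gauge ρ)
    (a : ℕ → ℝ → ℝ) (ha : ∀ n, Mod ρ (a n)) :
    (∃ L, Mod ρ L ∧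
        SharpTendsto ρ (fun m ε => ∑ n ∈ Finset.range m, a n ε) L) ↔
      SharpTendsto ρ a 0 := by
  have hS : ∀ m : ℕ, Mod ρ (fun ε => ∑ k ∈ Finset.range m, a k ε) := mod_sum hρ a ha
  constructor
  · rintro ⟨L, hLmod, hconv⟩
    intro q
    obtain ⟨M, hM⟩ := hconv (q+2)
    refine ⟨M, fun n hn => ?_⟩
    have h1 := ltG_pow_elim hρ (mod_abs (mod_sub hρ (hS (n+1)) hLmod)) (hM (n+1) (by omega))
    have h2 := ltG_pow_elim hρ (mod_abs (mod_sub hρ (hS n) hLmod)) (hM n hn)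
    have hxmod : Mod ρ (fun ε => |a n ε - (0:ℝ→ℝ) ε|) :=
      mod_of_le (ha n) (by filter_upwards with ε; simp)
    apply ltG_of_forall hρ hxmod (mod_pow hρ q) (c := 1/2) (p := q) (by norm_num)
    show ∀ᶠ ε in F, |a n ε - (0:ℝ→ℝ) ε| + 1/2 * ρ ε ^ q ≤ ρ ε ^ q
    filter_upwards [h1, h2, gauge_small hρ (c := 1/3) (by norm_num)] with ε e1 e2 hg
    have ha_eq : a n ε = ((∑ k ∈ Finset.range (n+1), a k ε) - L ε)
        - ((∑ k ∈ Finset.range n, a k ε) - L ε) := by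
      rw [Finset.sum_range_succ]; ring
    have habs : |a n ε - (0:ℝ→ℝ) ε| ≤ 2 * ρ ε ^ (q+2) + 2 * ρ ε ^ (q+2) := by
      rw [Pi.zero_apply, sub_zero, ha_eq]
      exact le_trans (abs_sub _ _) (add_le_add e1 e2)
    have h6 : 4 * ρ ε ^ (q+2) ≤ 1/2 * ρ ε ^ q := by
      have hrw : ρ ε ^ (q+2) = ρ ε * ρ ε * ρ ε ^ q := by ring
      rw [hrw]
      have h9 : ρ ε * ρ ε ≤ 1/9 := by nlinarith [hg.1, hg.2]
      have h10 := mul_le_mul_of_nonneg_right h9 (pow_pos hg.1 q).le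
      linarith [pow_pos hg.1 q]
    linarith
  · intro hb
    have step1 : ∀ q : ℕ, ∃ M : ℕ, ∀ n, M ≤ n → ∀ᶠ ε in F, |a n ε| ≤ 2 * ρ ε ^ q := by
      intro q
      obtain ⟨M, hM⟩ := hb q
      refine ⟨M, fun n hn => ?_⟩
      have hxmod : Mod ρ (fun ε => |a n ε - (0:ℝ→ℝ) ε|) :=
        mod_of_le (ha n) (by filter_upwards with ε; simp)
      have := ltG_pow_elim hρ hxmod (hM n hn)
      filter_upwards [this] with ε hε
      simpa using hε
    choose M hM using step1
    set Nf : ℕ → ℕ := fun q => Nat.rec (M 0) (fun q ih => max (ih + 1) (M (q+1))) q with hNfdef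
    have hNf0 : Nf 0 = M 0 := rfl
    have hNfs : ∀ q, Nf (q+1) = max (Nf q + 1) (M (q+1)) := fun q => rfl
    have hNfmono : StrictMono Nf := strictMono_nat_of_lt_succ (fun q => by rw [hNfs]; omega)
    have hNfM : ∀ q, M q ≤ Nf q := by
      intro q
      cases q with
      | zero => exact le_of_eq hNf0.symm
      | succ q => rw [hNfs]; omega
    have hbound : ∀ q n, Nf q ≤ n → ∀ᶠ ε in F, |a n ε| ≤ 2 * ρ ε ^ q :=
      fun q n hn => hM q n (le_trans (hNfM q) hn)
    have hE : ∀ q : ℕ, ∀ᶠ ε in F, ((0 < ρ ε ∧ ρ ε ≤ 1) ∧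
        2 * ((Nf (q+1) - Nf q : ℕ) : ℝ) * ρ ε ≤ (1/2:ℝ)^(q+1)) ∧
        ∀ k ∈ Finset.Ico (Nf q) (Nf (q+1)), |a k ε| ≤ 2 * ρ ε ^ q := by
      intro q
      have c2 : ∀ᶠ ε in F, 2 * ((Nf (q+1) - Nf q : ℕ) : ℝ) * ρ ε ≤ (1/2:ℝ)^(q+1) := by
        have hd0 : (0:ℝ) ≤ ((Nf (q+1) - Nf q : ℕ) : ℝ) := Nat.cast_nonneg _
        have hcpos : 0 < (1/2:ℝ)^(q+1) / (2*((Nf (q+1) - Nf q : ℕ) : ℝ)+1) := by positivity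
        filter_upwards [gauge_small hρ hcpos] with ε hg
        have h7 := hg.2
        rw [lt_div_iff₀ (by positivity)] at h7
        nlinarith [hg.1]
      have c3 : ∀ᶠ ε in F, ∀ k ∈ Finset.Ico (Nf q) (Nf (q+1)), |a k ε| ≤ 2 * ρ ε ^ q := by
        rw [Filter.eventually_all_finset]
        intro k hk
        exact hbound q k (Finset.mem_Ico.mp hk).1
      filter_upwards [gauge_mem hρ, c2, c3] with ε h1 h2 h3 using ⟨⟨h1, h2⟩, h3⟩
    choose η hηpos hη using fun q => exists_Ioo (hE q)
    set δ : ℕ → ℝ := fun q => Nat.rec 1 (fun q ih => min (ih/2) (η q)) q with hδdef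
    have hδ0 : δ 0 = 1 := rfl
    have hδs : ∀ q, δ (q+1) = min (δ q / 2) (η q) := fun q => rfl
    have hδpos : ∀ q, 0 < δ q := by
      intro q
      induction q with
      | zero => rw [hδ0]; norm_num
      | succ q ih => rw [hδs]; exact lt_min (by linarith) (hηpos q)
    have hδlt : ∀ q, δ (q+1) < δ q := by
      intro q
      rw [hδs]
      exact lt_of_le_of_lt (min_le_left _ _) (by linarith [hδpos q])
    have hδanti : Antitone δ := antitone_nat_of_succ_le (fun q => (hδlt q).le)
    have hδle : ∀ q, δ q ≤ (1/2:ℝ)^q := by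
      intro q
      induction q with
      | zero => rw [hδ0]; norm_num
      | succ q ih =>
        rw [hδs, pow_succ]
        exact le_trans (min_le_left _ _) (by linarith)
    have hex : ∀ ε : ℝ, 0 < ε → ∃ q, δ (q+1) ≤ ε := by
      intro ε hε
      obtain ⟨q, hq⟩ := exists_pow_lt_of_lt_one hε (by norm_num : (1/2:ℝ) < 1)
      refine ⟨q, le_of_lt (lt_of_le_of_lt ?_ hq)⟩
      exact le_trans (hδle (q+1)) (pow_le_pow_of_le_one (by norm_num) (by norm_num) (Nat.le_succ q))
    have hεE : ∀ q ε, 0 < ε → ε < δ (q+1) →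
        ((0 < ρ ε ∧ ρ ε ≤ 1) ∧ 2 * ((Nf (q+1) - Nf q : ℕ) : ℝ) * ρ ε ≤ (1/2:ℝ)^(q+1)) ∧
        ∀ k ∈ Finset.Ico (Nf q) (Nf (q+1)), |a k ε| ≤ 2 * ρ ε ^ q := by
      intro q ε h1 h2
      exact hη q ε h1 (lt_of_lt_of_le h2 (by rw [hδs]; exact min_le_right _ _))
    have hex' : ∀ ε : ℝ, ∃ q, δ (q+1) ≤ ε ∨ ε ≤ 0 := by
      intro ε
      rcases le_or_gt ε 0 with h | h
      · exact ⟨0, Or.inr h⟩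
      · obtain ⟨q, hq⟩ := hex ε h
        exact ⟨q, Or.inl hq⟩
    set Q : ℝ → ℕ := fun ε => Nat.find (hex' ε) with hQdef
    set Lf : ℝ → ℝ := fun ε => ∑ k ∈ Finset.range (Nf (Q ε)), a k ε with hLfdef
    have hQspec : ∀ ε, 0 < ε → δ (Q ε + 1) ≤ ε := by
      intro ε hε
      rcases Nat.find_spec (hex' ε) with h | h
      · exact h
      · linarith
    have hQlt : ∀ ε, 0 < ε → ε < δ 0 → ε < δ (Q ε) := by
      intro ε hε h0
      by_cases h : Q ε = 0
      · rw [h]; exact h0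
      · have h1 : Q ε - 1 < Q ε := by omega
        have hm := Nat.find_min (hex' ε) h1
        push_neg at hm
        have h2 := hm.1
        have h3 : Q ε - 1 + 1 = Q ε := by omega
        rwa [h3] at h2
    have hQge : ∀ (m : ℕ) ε, 0 < ε → ε < δ m → m ≤ Q ε := by
      intro m ε hε hm
      by_contra h
      push_neg at h
      have : δ m ≤ δ (Q ε + 1) := hδanti (show Q ε + 1 ≤ m by omega)
      linarith [hQspec ε hε]
    have key : ∀ i q : ℕ, i + 1 ≤ q → ∀ ε, 0 < ε → ε < δ q →
        ∑ k ∈ Finset.Ico (Nf (i+1)) (Nf q), |a k ε| ≤ ρ ε ^ i * ((1/2:ℝ)^(i+1) - (1/2:ℝ)^q) := by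
      intro i q
      induction q with
      | zero => omega
      | succ q ih =>
        intro hq ε hε hεδ
        have hEq := hεE q ε hε hεδ
        have hρpos := hEq.1.1.1
        have hρle1 := hEq.1.1.2
        rcases Nat.lt_or_ge q (i+1) with hcase | hcase
        · have hqi : q = i := by omega
          subst hqi
          simp [Finset.Ico_self]
        · have hεδq : ε < δ q := lt_of_lt_of_le hεδ (hδlt q).le
          have h1 := ih hcase ε hε hεδq
          rw [← Finset.sum_Ico_consecutive (fun k => |a k ε|) (hNfmono.monotone hcase)
            (hNfmono (Nat.lt_succ_self q)).le]
          have h2 : ∑ k ∈ Finset.Ico (Nf q) (Nf (q+1)), |a k ε| ≤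
              ((Nf (q+1) - Nf q : ℕ) : ℝ) * (2 * ρ ε ^ q) := by
            have h2' := Finset.sum_le_card_nsmul (Finset.Ico (Nf q) (Nf (q+1)))
              (fun k => |a k ε|) (2 * ρ ε ^ q) (fun k hk => hEq.2 k hk)
            rw [Nat.card_Ico] at h2'
            simpa [nsmul_eq_mul] using h2'
          obtain ⟨j, rfl⟩ : ∃ j, q = j + 1 := ⟨q - 1, by omega⟩
          have e := hEq.1.2
          have h3 : ((Nf (j+1+1) - Nf (j+1) : ℕ) : ℝ) * (2 * ρ ε ^ (j+1)) ≤
              (1/2:ℝ)^(j+1+1) * ρ ε ^ j := by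
            have hpj : (0:ℝ) ≤ ρ ε ^ j := pow_nonneg hρpos.le _
            have h3' := mul_le_mul_of_nonneg_right e hpj
            have hrw : ρ ε ^ (j+1) = ρ ε * ρ ε ^ j := by ring
            rw [hrw]
            nlinarith [h3']
          have h4 : ρ ε ^ j ≤ ρ ε ^ i := pow_le_pow_of_le_one hρpos.le hρle1 (by omega)
          have h5 : (1/2:ℝ)^(j+1+1) * ρ ε ^ j ≤ (1/2:ℝ)^(j+1+1) * ρ ε ^ i :=
            mul_le_mul_of_nonneg_left h4 (by positivity)
          have goal_eq : ρ ε ^ i * ((1/2:ℝ)^(i+1) - (1/2:ℝ)^(j+1+1)) =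
              ρ ε ^ i * ((1/2:ℝ)^(i+1) - (1/2:ℝ)^(j+1)) + (1/2:ℝ)^(j+1+1) * ρ ε ^ i := by
            ring
          rw [goal_eq]
          exact add_le_add h1 (le_trans h2 (le_trans h3 h5))
    have hg1mod : Mod ρ (fun ε => (∑ k ∈ Finset.range (Nf 1), |a k ε|) + 1) :=
      mod_add hρ (mod_sum hρ (fun k ε => |a k ε|) (fun k => mod_abs (ha k)) (Nf 1)) (mod_const ρ 1)
    have hLmod : Mod ρ Lf := by
      apply mod_of_le hg1mod
      filter_upwards [F_Ioo (hδpos 1)] with ε hε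
      obtain ⟨hε0, hεδ1⟩ := hε
      have hq1 : 1 ≤ Q ε := hQge 1 ε hε0 hεδ1
      have hεδ0 : ε < δ 0 := lt_trans hεδ1 (hδlt 0)
      have hεδq : ε < δ (Q ε) := hQlt ε hε0 hεδ0
      have hsplit : ∑ k ∈ Finset.range (Nf (Q ε)), a k ε =
          (∑ k ∈ Finset.range (Nf 1), a k ε) + ∑ k ∈ Finset.Ico (Nf 1) (Nf (Q ε)), a k ε := by
        rw [Finset.range_eq_Ico,
          ← Finset.sum_Ico_consecutive (fun k => a k ε) (Nat.zero_le (Nf 1)) (hNfmono.monotone hq1),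
          Finset.range_eq_Ico]
      have hk := key 0 (Q ε) hq1 ε hε0 hεδq
      have habs1 : |∑ k ∈ Finset.range (Nf 1), a k ε| ≤ ∑ k ∈ Finset.range (Nf 1), |a k ε| :=
        Finset.abs_sum_le_sum_abs _ _
      have habs2 : |∑ k ∈ Finset.Ico (Nf 1) (Nf (Q ε)), a k ε| ≤
          ∑ k ∈ Finset.Ico (Nf 1) (Nf (Q ε)), |a k ε| := Finset.abs_sum_le_sum_abs _ _
      have hb2 : ∑ k ∈ Finset.Ico (Nf 1) (Nf (Q ε)), |a k ε| ≤ 1 := by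
        refine le_trans hk ?_
        rw [pow_zero, one_mul]
        have hp : (0:ℝ) ≤ (1/2:ℝ)^(Q ε) := by positivity
        norm_num
        linarith
      have hnn : (0:ℝ) ≤ (∑ k ∈ Finset.range (Nf 1), |a k ε|) + 1 := by
        positivity
      rw [abs_of_nonneg hnn]
      show |Lf ε| ≤ _
      rw [hLfdef]
      show |∑ k ∈ Finset.range (Nf (Q ε)), a k ε| ≤ _
      rw [hsplit]
      calc |(∑ k ∈ Finset.range (Nf 1), a k ε) + ∑ k ∈ Finset.Ico (Nf 1) (Nf (Q ε)), a k ε|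
          ≤ |∑ k ∈ Finset.range (Nf 1), a k ε| + |∑ k ∈ Finset.Ico (Nf 1) (Nf (Q ε)), a k ε| :=
            abs_add_le _ _
        _ ≤ (∑ k ∈ Finset.range (Nf 1), |a k ε|) + 1 := by linarith
    refine ⟨Lf, hLmod, ?_⟩
    intro q'
    refine ⟨Nf (q'+2), fun m hm => ?_⟩
    have hxmod : Mod ρ (fun ε => |(∑ k ∈ Finset.range m, a k ε) - Lf ε|) :=
      mod_abs (mod_sub hρ (hS m) hLmod)
    apply ltG_of_forall hρ hxmod (mod_pow hρ q') (c := 1/2) (p := q') (by norm_num)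
    show ∀ᶠ ε in F, |(∑ k ∈ Finset.range m, a k ε) - Lf ε| + 1/2 * ρ ε ^ q' ≤ ρ ε ^ q'
    have hm2 : q' + 2 ≤ m := le_trans hNfmono.le_apply hm
    filter_upwards [F_Ioo (hδpos m), gauge_small hρ (c := 1/2) (by norm_num)] with ε hε hg
    obtain ⟨hε0, hεδm⟩ := hε
    have hqm : m ≤ Q ε := hQge m ε hε0 hεδm
    have hεδ0 : ε < δ 0 := lt_of_lt_of_le hεδm (hδanti (Nat.zero_le m))
    have hεδq : ε < δ (Q ε) := hQlt ε hε0 hεδ0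
    have hqq : q' + 1 + 1 ≤ Q ε := le_trans hm2 hqm
    have hNfQ : m ≤ Nf (Q ε) := le_trans (le_trans hNfmono.le_apply (hNfmono.monotone hqm)) (le_refl _)
    have hdiff : (∑ k ∈ Finset.range m, a k ε) - Lf ε =
        -(∑ k ∈ Finset.Ico m (Nf (Q ε)), a k ε) := by
      rw [hLfdef]
      show (∑ k ∈ Finset.range m, a k ε) - (∑ k ∈ Finset.range (Nf (Q ε)), a k ε) = _
      rw [Finset.range_eq_Ico, Finset.range_eq_Ico,
        ← Finset.sum_Ico_consecutive (fun k => a k ε) (Nat.zero_le m) hNfQ]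
      ring
    have hsubset : Finset.Ico m (Nf (Q ε)) ⊆ Finset.Ico (Nf (q'+1+1)) (Nf (Q ε)) :=
      Finset.Ico_subset_Ico hm (le_refl _)
    have habs : |(∑ k ∈ Finset.range m, a k ε) - Lf ε| ≤
        ∑ k ∈ Finset.Ico (Nf (q'+1+1)) (Nf (Q ε)), |a k ε| := by
      rw [hdiff, abs_neg]
      refine le_trans (Finset.abs_sum_le_sum_abs _ _) ?_
      exact Finset.sum_le_sum_of_subset_of_nonneg hsubset (fun k _ _ => abs_nonneg _)
    have hkey := key (q'+1) (Q ε) hqq ε hε0 hεδq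
    have hρpos := hg.1
    have hp : (0:ℝ) < ρ ε ^ q' := pow_pos hρpos _
    have h6 : ρ ε ^ (q'+1) * ((1/2:ℝ)^(q'+1+1) - (1/2:ℝ)^(Q ε)) ≤ 1/2 * ρ ε ^ q' := by
      have hfrac1 : ((1/2:ℝ)^(q'+1+1) - (1/2:ℝ)^(Q ε)) ≤ 1 := by
        have hh1 : (0:ℝ) ≤ (1/2:ℝ)^(Q ε) := by positivity
        have hh2 : (1/2:ℝ)^(q'+1+1) ≤ 1 := pow_le_one₀ (by norm_num) (by norm_num)
        linarith
      have hfrac0 : (0:ℝ) ≤ ((1/2:ℝ)^(q'+1+1) - (1/2:ℝ)^(Q ε)) :=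
        sub_nonneg.mpr (pow_le_pow_of_le_one (by norm_num) (by norm_num) hqq)
      have e1 : ρ ε ^ (q'+1) * ((1/2:ℝ)^(q'+1+1) - (1/2:ℝ)^(Q ε)) ≤ ρ ε ^ (q'+1) := by
        nlinarith [pow_pos hρpos (q'+1)]
      have e2 : ρ ε ^ (q'+1) ≤ 1/2 * ρ ε ^ q' := by
        have hrw : ρ ε ^ (q'+1) = ρ ε ^ q' * ρ ε := by ring
        rw [hrw]
        nlinarith [hg.2, hp]
      linarith
    linarith [habs, hkey, h6]

end RC
end
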